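/- Let f be a bent Boolean function on F_2^{2m} with m ≥ 1 and f(0) = 0. Then the Cayley graph Cay(f) is strongly regular with parameters (4^m, 2^{2m-1} - 2^{m-1}, 2^{2m-2} - 2^{m-1}, 2^{2m-2} - 2^{m-1}) if wt(f) = 2^{2m-1} - 2^{m-1}, and strongly regular with parameters (4^m, 2^{2m-1} + 2^{m-1}, 2^{2m-2} + 2^{m-1}, 2^{2m-2} + 2^{m-1}) if wt(f) = 2^{2m-1} + 2^{m-1}. In particular λ = μ in both cases. -/

import Mathlib

open Finset

/-- Inner product on `F_2^n`. -/
def dotp {n : ℕ} (x y : Fin n → ZMod 2) : ZMod 2 := ∑ i, x i * y i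

/-- Hamming weight of a Boolean function: the cardinality of its support. -/
def wt {n : ℕ} (f : (Fin n → ZMod 2) → ZMod 2) : ℕ :=
  (Finset.univ.filter fun x => f x = 1).card

/-- Walsh–Hadamard transform of a Boolean function. -/
def walsh {n : ℕ} (f : (Fin n → ZMod 2) → ZMod 2) (x : Fin n → ZMod 2) : ℤ :=
  ∑ y : Fin n → ZMod 2, (-1 : ℤ) ^ (f y + dotp x y).val

/-- A Boolean function on `F_2^(2m)` is bent if its Walsh–Hadamard transform has constant
absolute value `2^m`. -/
def IsBent {m : ℕ} (f : (Fin (2 * m) → ZMod 2) → ZMod 2) : Prop :=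
  ∀ x, |walsh f x| = 2 ^ m

/-- The dual of a bent function: `f̂ x = 0` if `W_f x = 2^m`, and `1` otherwise
(for bent `f` the other case is exactly `W_f x = -2^m`). -/
def dual {m : ℕ} (f : (Fin (2 * m) → ZMod 2) → ZMod 2) :
    (Fin (2 * m) → ZMod 2) → ZMod 2 :=
  fun x => if walsh f x = 2 ^ m then 0 else 1

/-- The weight class of a bent function on `F_2^(2m)`:
`0` if its weight is `2^(2m-1) - 2^(m-1)`, and `1` otherwise. -/
def wc {m : ℕ} (f : (Fin (2 * m) → ZMod 2) → ZMod 2) : ZMod 2 :=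
  if wt f = 2 ^ (2 * m - 1) - 2 ^ (m - 1) then 0 else 1

/-- The Cayley graph of a Boolean function: distinct `x`, `y` are adjacent iff `f (x+y) = 1`. -/
def cayley {n : ℕ} (f : (Fin n → ZMod 2) → ZMod 2) : SimpleGraph (Fin n → ZMod 2) where
  Adj x y := x ≠ y ∧ f (x + y) = 1
  symm := ⟨fun x y h => ⟨h.1.symm, by rw [add_comm]; exact h.2⟩⟩
  loopless := ⟨fun x h => h.1 rfl⟩

instance cayleyAdjDecidable {n : ℕ} (f : (Fin n → ZMod 2) → ZMod 2) :
    DecidableRel (cayley f).Adj :=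
  fun x y => inferInstanceAs (Decidable (x ≠ y ∧ f (x + y) = 1))

/-- the Cayley graph of a bent function on `F_2^(2m)` with `f 0 = 0` is
strongly regular with parameters determined by the weight of `f`; in both cases `λ = μ`. -/
def chi (a : ZMod 2) : ℤ := (-1) ^ a.val

lemma chi_add : ∀ a b : ZMod 2, chi (a + b) = chi a * chi b := by decide

lemma chi_eq : ∀ a : ZMod 2, chi a = 1 - 2 * (a.val : ℤ) := by decide

lemma val_add_int : ∀ a b : ZMod 2,
    (((a + b).val : ℤ)) = (a.val : ℤ) + b.val - 2 * ((a.val : ℤ) * b.val) := by decide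

lemma val_mul_ind : ∀ a b : ZMod 2,
    (a.val : ℤ) * (b.val : ℤ) = if a = 1 ∧ b = 1 then 1 else 0 := by decide

lemma val_ind : ∀ a : ZMod 2, (a.val : ℤ) = if a = 1 then 1 else 0 := by decide

lemma dotp_comm {n : ℕ} (x y : Fin n → ZMod 2) : dotp x y = dotp y x := by
  simp [dotp, mul_comm]

lemma dotp_add_left {n : ℕ} (x y z : Fin n → ZMod 2) :
    dotp (x + y) z = dotp x z + dotp y z := by
  simp [dotp, add_mul, Finset.sum_add_distrib]

lemma addself {n : ℕ} (x : Fin n → ZMod 2) : x + x = 0 := by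
  funext i; exact CharTwo.add_self_eq_zero (x i)

lemma negself {n : ℕ} (x : Fin n → ZMod 2) : -x = x :=
  neg_eq_of_add_eq_zero_left (addself x)

lemma sum_chi {n : ℕ} (d : Fin n → ZMod 2) :
    ∑ x : Fin n → ZMod 2, chi (dotp d x) = if d = 0 then (2 : ℤ) ^ n else 0 := by
  split_ifs with hd
  · subst hd
    have : ∀ x : Fin n → ZMod 2, dotp 0 x = 0 := by intro x; simp [dotp]
    simp [this, chi, Finset.card_univ]
  · obtain ⟨i, hi⟩ : ∃ i, d i ≠ 0 := by
      by_contra h; push_neg at h; exact hd (funext h)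
    have hdi : d i = 1 := by
      have : ∀ a : ZMod 2, a ≠ 0 → a = 1 := by decide
      exact this _ hi
    set e : Fin n → ZMod 2 := Pi.single i 1 with he
    have hde : dotp d e = 1 := by
      rw [dotp, Finset.sum_eq_single i]
      · simp [he, hdi]
      · intro j _ hj; simp [he, Pi.single_eq_of_ne hj]
      · simp
    have h1 : ∑ x : Fin n → ZMod 2, chi (dotp d (x + e)) = ∑ x, chi (dotp d x) :=
      Fintype.sum_equiv (Equiv.addRight e) _ _ (fun x => rfl)
    have h2 : ∀ x : Fin n → ZMod 2, chi (dotp d (x + e)) = - chi (dotp d x) := by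
      intro x
      have : dotp d (x + e) = dotp d x + 1 := by
        rw [dotp_comm, dotp_add_left, dotp_comm x d, dotp_comm e d, hde]
      rw [this, chi_add]
      have hcone : chi 1 = -1 := by simp [chi, ZMod.val_one]
      rw [hcone]; ring
    rw [Finset.sum_congr rfl (fun x _ => h2 x)] at h1
    simp only [Finset.sum_neg_distrib] at h1
    linarith

lemma walsh_eq {n : ℕ} (f : (Fin n → ZMod 2) → ZMod 2) (x : Fin n → ZMod 2) :
    walsh f x = ∑ y, chi (f y + dotp x y) := rfl

lemma card_V (n : ℕ) : Fintype.card (Fin n → ZMod 2) = 2 ^ n := by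
  simp

lemma autocorr {m : ℕ} (f : (Fin (2 * m) → ZMod 2) → ZMod 2) (hf : IsBent f)
    (d : Fin (2 * m) → ZMod 2) (hd : d ≠ 0) :
    ∑ u, chi (f u + f (u + d)) = 0 := by
  have hws : ∀ x, (walsh f x) ^ 2 = 2 ^ (2 * m) := by
    intro x
    rw [← sq_abs, hf x, ← pow_mul, mul_comm]
  have step1 : ∀ x, (walsh f x) ^ 2 * chi (dotp d x)
      = ∑ y, ∑ z, chi (f y + f z) * chi (dotp (y + z + d) x) := by
    intro x
    have hsq : (walsh f x) ^ 2
        = ∑ y, ∑ z, chi (f y + dotp x y) * chi (f z + dotp x z) := by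
      rw [sq, walsh_eq, Finset.sum_mul_sum]
    rw [hsq, Finset.sum_mul]
    refine Finset.sum_congr rfl fun y _ => ?_
    rw [Finset.sum_mul]
    refine Finset.sum_congr rfl fun z _ => ?_
    calc chi (f y + dotp x y) * chi (f z + dotp x z) * chi (dotp d x)
        = chi (f y) * chi (f z) * (chi (dotp y x) * chi (dotp z x) * chi (dotp d x)) := by
          rw [chi_add, chi_add, dotp_comm x y, dotp_comm x z]; ring
      _ = chi (f y + f z) * chi (dotp (y + z + d) x) := by
          rw [chi_add, dotp_add_left, dotp_add_left, chi_add, chi_add]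
  have hS2 : ∑ x, (walsh f x) ^ 2 * chi (dotp d x)
      = 2 ^ (2 * m) * ∑ u, chi (f u + f (u + d)) := by
    rw [Finset.sum_congr rfl (fun x _ => step1 x), Finset.sum_comm]
    have inner : ∀ y, ∑ x, ∑ z, chi (f y + f z) * chi (dotp (y + z + d) x)
        = 2 ^ (2 * m) * chi (f y + f (y + d)) := by
      intro y
      rw [Finset.sum_comm]
      have hz : ∀ z, ∑ x, chi (f y + f z) * chi (dotp (y + z + d) x)
          = chi (f y + f z) * (if y + z + d = 0 then (2:ℤ) ^ (2*m) else 0) := by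
        intro z
        rw [← Finset.mul_sum, sum_chi]
      rw [Finset.sum_congr rfl (fun z _ => hz z)]
      have key : ∀ a b : Fin (2*m) → ZMod 2, a + b = 0 ↔ a = b := by
        intro a b
        constructor
        · intro h
          have h2 := congrArg (fun w => w + b) h
          simpa [add_assoc, addself] using h2
        · intro h; subst h; exact addself a
      have hiff : ∀ z : Fin (2*m) → ZMod 2, (y + z + d = 0) = (z = y + d) := by
        intro z
        rw [show y + z + d = z + (y + d) from by ring]
        exact propext (key z (y + d))
      simp only [hiff, mul_ite, mul_zero]
      rw [Finset.sum_ite_eq' Finset.univ (y + d) (fun z => chi (f y + f z) * (2:ℤ)^(2*m))]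
      simp [mul_comm]
    rw [Finset.sum_congr rfl (fun y _ => inner y), ← Finset.mul_sum]
  have hS1 : ∑ x, (walsh f x) ^ 2 * chi (dotp d x) = 0 := by
    rw [Finset.sum_congr rfl (fun x _ => by rw [hws x]), ← Finset.mul_sum, sum_chi,
      if_neg hd, mul_zero]
  rw [hS1] at hS2
  have h2 : (2:ℤ) ^ (2*m) ≠ 0 := by positivity
  have hS2 := (mul_eq_zero.mp hS2.symm).resolve_left h2
  tauto

lemma Ncount {m : ℕ} (f : (Fin (2 * m) → ZMod 2) → ZMod 2) (hf : IsBent f)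
    (d : Fin (2 * m) → ZMod 2) (hd : d ≠ 0) :
    4 * (((Finset.univ.filter fun u => f u = 1 ∧ f (u + d) = 1).card : ℤ))
      = 4 * (wt f : ℤ) - 2 ^ (2 * m) := by
  have h0 := autocorr f hf d hd
  have hwt : ∑ u, ((f u).val : ℤ) = (wt f : ℤ) := by
    rw [Finset.sum_congr rfl (fun u _ => val_ind (f u)), Finset.sum_boole, wt]
  have htr : ∑ u, ((f (u + d)).val : ℤ) = (wt f : ℤ) := by
    exact (Fintype.sum_equiv (Equiv.addRight d) (fun u => ((f (u + d)).val : ℤ))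
      (fun u => ((f u).val : ℤ)) (fun u => rfl)).trans hwt
  have hN : ∑ u, ((f u).val : ℤ) * ((f (u + d)).val : ℤ)
      = ((Finset.univ.filter fun u => f u = 1 ∧ f (u + d) = 1).card : ℤ) := by
    rw [Finset.sum_congr rfl (fun u _ => val_mul_ind (f u) (f (u + d))), Finset.sum_boole]
  have hexp : ∑ u, chi (f u + f (u + d))
      = 2 ^ (2 * m) - 2 * ((wt f : ℤ) + (wt f : ℤ)
          - 2 * ((Finset.univ.filter fun u => f u = 1 ∧ f (u + d) = 1).card : ℤ)) := by
    have : ∀ u, chi (f u + f (u + d))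
        = 1 - 2 * (((f u).val : ℤ) + ((f (u + d)).val : ℤ)
            - 2 * (((f u).val : ℤ) * ((f (u + d)).val : ℤ))) := by
      intro u
      rw [chi_eq, val_add_int]
    rw [Finset.sum_congr rfl (fun u _ => this u)]
    rw [Finset.sum_sub_distrib]
    rw [← Finset.mul_sum]
    rw [Finset.sum_sub_distrib, Finset.sum_add_distrib, ← Finset.mul_sum]
    rw [hwt, htr, hN]
    simp [Finset.card_univ]
  rw [h0] at hexp
  linarith

lemma common_count {m : ℕ} (f : (Fin (2 * m) → ZMod 2) → ZMod 2) (h0 : f 0 = 0)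
    (x y : Fin (2 * m) → ZMod 2) (hxy : x ≠ y) :
    Fintype.card ((cayley f).commonNeighbors x y)
      = (Finset.univ.filter fun u => f u = 1 ∧ f (u + (x + y)) = 1).card := by
  have hne : ∀ a z : Fin (2 * m) → ZMod 2, f (a + z) = 1 → a ≠ z := by
    intro a z h1 heq
    subst heq
    rw [addself, h0] at h1
    exact one_ne_zero h1.symm
  rw [← Set.toFinset_card]
  rw [show ((cayley f).commonNeighbors x y).toFinset
      = Finset.univ.filter (fun z => f (x + z) = 1 ∧ f (y + z) = 1) by
    ext z
    simp only [Set.mem_toFinset, SimpleGraph.mem_commonNeighbors, Finset.mem_filter,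
      Finset.mem_univ, true_and]
    simp only [cayley]
    constructor
    · rintro ⟨⟨_, h1⟩, ⟨_, h2⟩⟩; exact ⟨h1, h2⟩
    · rintro ⟨h1, h2⟩; exact ⟨⟨hne x z h1, h1⟩, ⟨hne y z h2, h2⟩⟩]
  refine Finset.card_nbij' (fun z => x + z) (fun u => x + u) ?_ ?_ ?_ ?_
  · intro z hz
    simp only [Finset.mem_coe, Finset.mem_filter, Finset.mem_univ, true_and] at hz ⊢
    refine ⟨hz.1, ?_⟩
    rw [show x + z + (x + y) = y + z + (x + x) from by ring, addself, add_zero]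
    exact hz.2
  · intro u hu
    simp only [Finset.mem_coe, Finset.mem_filter, Finset.mem_univ, true_and] at hu ⊢
    constructor
    · rw [show x + (x + u) = u + (x + x) from by ring, addself, add_zero]
      exact hu.1
    · rw [show y + (x + u) = u + (x + y) from by ring]
      exact hu.2
  · intro z _
    show x + (x + z) = z
    rw [show x + (x + z) = z + (x + x) from by ring, addself, add_zero]
  · intro u _
    show x + (x + u) = u
    rw [show x + (x + u) = u + (x + x) from by ring, addself, add_zero]

lemma degree_eq {m : ℕ} (f : (Fin (2 * m) → ZMod 2) → ZMod 2) (h0 : f 0 = 0)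
    (x : Fin (2 * m) → ZMod 2) : (cayley f).degree x = wt f := by
  have hne : ∀ a z : Fin (2 * m) → ZMod 2, f (a + z) = 1 → a ≠ z := by
    intro a z h1 heq
    subst heq
    rw [addself, h0] at h1
    exact one_ne_zero h1.symm
  rw [SimpleGraph.degree, show (cayley f).neighborFinset x
      = Finset.univ.filter (fun z => f (x + z) = 1) by
    ext z
    simp only [SimpleGraph.mem_neighborFinset, Finset.mem_filter, Finset.mem_univ,
      true_and]
    simp only [cayley]
    exact ⟨fun h => h.2, fun h => ⟨hne x z h, h⟩⟩]
  rw [wt]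
  refine Finset.card_nbij' (fun z => x + z) (fun u => x + u) ?_ ?_ ?_ ?_
  · intro z hz
    simpa using (Finset.mem_filter.mp hz).2
  · intro u hu
    simp only [Finset.mem_coe, Finset.mem_filter, Finset.mem_univ, true_and] at hu ⊢
    rw [show x + (x + u) = u + (x + x) from by ring, addself, add_zero]
    exact hu
  · intro z _
    show x + (x + z) = z
    rw [show x + (x + z) = z + (x + x) from by ring, addself, add_zero]
  · intro u _
    show x + (x + u) = u
    rw [show x + (x + u) = u + (x + x) from by ring, addself, add_zero]

lemma add_eq_zero_iff'' {n : ℕ} (a b : Fin n → ZMod 2) : a + b = 0 ↔ a = b := by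
  constructor
  · intro h
    have h2 := congrArg (fun w => w + b) h
    simpa [add_assoc, addself] using h2
  · intro h; subst h; exact addself a

theorem cayley_of_bent_isSRG {m : ℕ} (hm : 1 ≤ m)
    (f : (Fin (2 * m) → ZMod 2) → ZMod 2) (hf : IsBent f) (h0 : f 0 = 0) :
    (wt f = 2 ^ (2 * m - 1) - 2 ^ (m - 1) →
      (cayley f).IsSRGWith (4 ^ m) (2 ^ (2 * m - 1) - 2 ^ (m - 1))
        (2 ^ (2 * m - 2) - 2 ^ (m - 1)) (2 ^ (2 * m - 2) - 2 ^ (m - 1))) ∧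
    (wt f = 2 ^ (2 * m - 1) + 2 ^ (m - 1) →
      (cayley f).IsSRGWith (4 ^ m) (2 ^ (2 * m - 1) + 2 ^ (m - 1))
        (2 ^ (2 * m - 2) + 2 ^ (m - 1)) (2 ^ (2 * m - 2) + 2 ^ (m - 1))) := by
  obtain ⟨A, hA⟩ : ∃ A : ℕ, A = 2 ^ (m - 1) := ⟨_, rfl⟩
  obtain ⟨B, hB⟩ : ∃ B : ℕ, B = A * A := ⟨_, rfl⟩
  have hA1 : 1 ≤ A := by rw [hA]; exact Nat.one_le_two_pow
  have hAB : A ≤ B := by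
    rw [hB]; exact Nat.le_mul_of_pos_left A hA1
  have hp1 : (2:ℕ) ^ (2 * m - 1) = B * 2 := by
    rw [hB, hA, show 2 * m - 1 = (m - 1) + ((m - 1) + 1) by omega, pow_add, pow_succ]
    ring
  have hp2 : (2:ℕ) ^ (2 * m - 2) = B := by
    rw [hB, hA, show 2 * m - 2 = (m - 1) + (m - 1) by omega, pow_add]
  have hpZ : ((2:ℤ)) ^ (2 * m) = 4 * (B : ℤ) := by
    have hn : (2:ℕ) ^ (2 * m) = 4 * B := by
      rw [hB, hA, show 2 * m = ((m - 1) + 1) + ((m - 1) + 1) by omega, pow_add,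
        pow_succ]
      ring
    have := congrArg (fun t : ℕ => (t : ℤ)) hn
    push_cast at this
    push_cast
    linarith
  have key4 : ∀ v w : Fin (2 * m) → ZMod 2, v ≠ w →
      4 * (Fintype.card ((cayley f).commonNeighbors v w) : ℤ)
        = 4 * (wt f : ℤ) - 4 * (B : ℤ) := by
    intro v w hvw
    have hd : v + w ≠ 0 := fun h => hvw ((add_eq_zero_iff'' v w).mp h)
    rw [common_count f h0 v w hvw, Ncount f hf (v + w) hd, hpZ]
  have hcard : Fintype.card (Fin (2 * m) → ZMod 2) = 4 ^ m := by
    rw [card_V, pow_mul]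
    norm_num
  constructor
  · intro hw
    rw [hp1, ← hA] at hw
    refine ⟨hcard, fun v => by rw [degree_eq f h0 v, hw, ← hA, ← hp1], ?_, ?_⟩
    · intro v w hadj
      have h4 := key4 v w hadj.1
      rw [hp2, ← hA]
      omega
    · intro v w hvw _
      have h4 := key4 v w hvw
      rw [hp2, ← hA]
      omega
  · intro hw
    rw [hp1, ← hA] at hw
    refine ⟨hcard, fun v => by rw [degree_eq f h0 v, hw, ← hA, ← hp1], ?_, ?_⟩
    · intro v w hadj
      have h4 := key4 v w hadj.1
      rw [hp2, ← hA]
      omega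
    · intro v w hvw _
      have h4 := key4 v w hvw
      rw [hp2, ← hA]
      omega
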